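/- Let Y be an infinite-dimensional Banach space over 𝕂 (= ℝ or ℂ). Then there exists a subset K of the closed unit ball of Y which is closed, convex, and balanced (i.e., θK ⊆ K for every scalar θ with |θ| ≤ 1), such that sup{‖y‖ : y ∈ K} = 1 but ‖y‖ < 1 for every y ∈ K; in particular, K is not remotal from 0. -/

import Mathlib

open Module TopologicalSpace

section Aux

variable {𝕜 Y : Type*} [RCLike 𝕜] [NormedAddCommGroup Y] [NormedSpace 𝕜 Y]
    [NormedSpace ℝ Y] [IsScalarTower ℝ 𝕜 Y]

omit [NormedSpace ℝ Y] [IsScalarTower ℝ 𝕜 Y] in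
lemma aux_exists_li_seq (hY : ¬ FiniteDimensional 𝕜 Y) : ∃ e : ℕ → Y, LinearIndependent 𝕜 e := by
  have hinf : (Basis.ofVectorSpaceIndex 𝕜 Y).Infinite := by
    intro hfin
    haveI := hfin.fintype
    exact hY (Module.Finite.of_basis (Basis.ofVectorSpace 𝕜 Y))
  let emb := hinf.natEmbedding
  exact ⟨fun n => Basis.ofVectorSpace 𝕜 Y (emb n),
    (Basis.ofVectorSpace 𝕜 Y).linearIndependent.comp emb emb.injective⟩

lemma aux_exists_unit_in_kernels
    {e : ℕ → Y} (he : LinearIndependent 𝕜 e) (f : ℕ → (Y →L[𝕜] 𝕜)) (N : ℕ) :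
    ∃ y ∈ Submodule.span 𝕜 (Set.range e), ‖y‖ = 1 ∧ ∀ n < N, f n y = 0 := by
  set S : Submodule 𝕜 Y := Submodule.span 𝕜 (Set.range fun i : Fin (N + 1) => e i) with hS
  have hle : S ≤ Submodule.span 𝕜 (Set.range e) :=
    Submodule.span_mono (by rintro _ ⟨i, rfl⟩; exact ⟨i, rfl⟩)
  have hli : LinearIndependent 𝕜 fun i : Fin (N + 1) => e i :=
    he.comp (Fin.val) Fin.val_injective
  have hrank : finrank 𝕜 S = N + 1 := by
    simpa using finrank_span_eq_card hli
  let ψ : S →ₗ[𝕜] (Fin N → 𝕜) :=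
    LinearMap.pi fun i : Fin N => (f i).toLinearMap.comp S.subtype
  have hker : ∃ y : S, y ≠ 0 ∧ ψ y = 0 := by
    by_contra h
    push_neg at h
    have hinj : Function.Injective ψ := by
      rw [← LinearMap.ker_eq_bot, Submodule.eq_bot_iff]
      intro y hy
      by_contra hy0
      exact absurd (LinearMap.mem_ker.mp hy) (h y hy0)
    have := LinearMap.finrank_le_finrank_of_injective hinj
    rw [hrank, finrank_fin_fun] at this
    omega
  obtain ⟨⟨y, hyS⟩, hy0, hψ⟩ := hker
  have hyne : y ≠ 0 := fun h => hy0 (Subtype.ext h)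
  refine ⟨(‖y‖⁻¹ : ℝ) • y, hle (Submodule.smul_of_tower_mem _ _ hyS),
    norm_smul_inv_norm hyne, fun n hn => ?_⟩
  have h0 : f n y = 0 := by
    have := congrFun hψ ⟨n, hn⟩
    simpa [ψ] using this
  rw [show (‖y‖⁻¹ : ℝ) • y = ((‖y‖⁻¹ : ℝ) : 𝕜) • y from (algebraMap_smul 𝕜 _ _).symm,
    map_smul, h0, smul_zero]

end Aux

/-- in every infinite-dimensional Banach space `Y` there is a closed, convex,
balanced subset `K` of the closed unit ball with `sup {‖y‖ : y ∈ K} = 1` but `‖y‖ < 1` for every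
`y ∈ K`; in particular `K` is not remotal from `0`. -/
theorem exists_closed_convex_balanced_not_remotal {𝕜 Y : Type*} [RCLike 𝕜]
    [NormedAddCommGroup Y] [NormedSpace 𝕜 Y] [CompleteSpace Y]
    [NormedSpace ℝ Y] [IsScalarTower ℝ 𝕜 Y]
    (hY : ¬ FiniteDimensional 𝕜 Y) :
    ∃ K : Set Y, K ⊆ Metric.closedBall 0 1 ∧ IsClosed K ∧ Convex ℝ K ∧ Balanced 𝕜 K ∧
      IsLUB ((fun y => ‖y‖) '' K) 1 ∧ (∀ y ∈ K, ‖y‖ < 1) ∧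
      ¬ ∃ e ∈ K, ∀ e' ∈ K, ‖(0 : Y) - e'‖ ≤ ‖(0 : Y) - e‖ := by
  obtain ⟨e, he⟩ := aux_exists_li_seq (𝕜 := 𝕜) hY
  set Z : Submodule 𝕜 Y := (Submodule.span 𝕜 (Set.range e)).topologicalClosure with hZdef
  have hZclosed : IsClosed (Z : Set Y) := Submodule.isClosed_topologicalClosure _
  have hspan_le : Submodule.span 𝕜 (Set.range e) ≤ Z :=
    Submodule.le_topologicalClosure _
  -- separability: get a dense sequence
  have hsep : IsSeparable (Z : Set Y) := by
    have h1 : IsSeparable (Submodule.span 𝕜 (Set.range e) : Set Y) :=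
      (Set.countable_range e).isSeparable.span
    simpa [hZdef, Submodule.topologicalClosure_coe] using h1.closure
  obtain ⟨c, hc_count, hc_sub⟩ := hsep
  have hc_ne : c.Nonempty := by
    rcases Set.eq_empty_or_nonempty c with h | h
    · exfalso
      have : (0 : Y) ∈ closure c := hc_sub (Z.zero_mem)
      simp [h] at this
    · exact h
  obtain ⟨z, hz⟩ := hc_count.exists_eq_range hc_ne
  -- the functionals
  have hf : ∀ n : ℕ, ∃ g : Y →L[𝕜] 𝕜, ‖g‖ ≤ 1 ∧ g (z n) = ‖z n‖ :=
    fun n => exists_dual_vector'' 𝕜 (z n)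
  choose f hf1 hf2 using hf
  -- separation of points of Z
  have hsepar : ∀ y ∈ Z, (∀ n, f n y = 0) → y = 0 := by
    intro y hyZ hfy
    by_contra hy0
    have hyc : y ∈ closure (Set.range z) := by rw [← hz]; exact hc_sub hyZ
    have hy0' : 0 < ‖y‖ := norm_pos_iff.mpr hy0
    have hpos : 0 < ‖y‖ / 3 := by linarith
    obtain ⟨w, ⟨n, rfl⟩, hwy⟩ := Metric.mem_closure_iff.mp hyc _ hpos
    rw [dist_eq_norm] at hwy
    have h1 : ‖z n‖ = ‖f n (z n)‖ := by rw [hf2]; simp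
    have h2 : f n (z n) = f n (z n - y) := by rw [map_sub, hfy, sub_zero]
    have h3 : ‖f n (z n - y)‖ ≤ ‖z n - y‖ := by
      calc ‖f n (z n - y)‖ ≤ ‖f n‖ * ‖z n - y‖ := (f n).le_opNorm _
        _ ≤ 1 * ‖z n - y‖ := by
            exact mul_le_mul_of_nonneg_right (hf1 n) (norm_nonneg _)
        _ = ‖z n - y‖ := one_mul _
    have h4 : ‖z n‖ ≤ ‖y - z n‖ := by
      rw [h1, h2]
      rw [norm_sub_rev] at h3
      exact h3
    have h5 : ‖y‖ ≤ ‖y - z n‖ + ‖z n‖ := by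
      have heq : (y - z n) + z n = y := by abel
      calc ‖y‖ = ‖(y - z n) + z n‖ := by rw [heq]
        _ ≤ ‖y - z n‖ + ‖z n‖ := norm_add_le _ _
    nlinarith [norm_nonneg (y - z n)]
  -- the set K
  set KS : Set Y := {y | y ∈ Z ∧ ‖y‖ ≤ 1 ∧ ∀ n, ‖f n y‖ ≤ 2 ^ n * (1 - ‖y‖)} with hKS
  have hlt : ∀ y ∈ KS, ‖y‖ < 1 := by
    rintro y ⟨hyZ, hy1, hyf⟩
    rcases lt_or_eq_of_le hy1 with h | h
    · exact h
    · exfalso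
      have hzero : ∀ n, f n y = 0 := by
        intro n
        have := hyf n
        rw [← h] at this
        simp at this
        exact norm_le_zero_iff.mp (by simpa using this)
      have : y = 0 := hsepar y hyZ hzero
      rw [this] at h
      simp at h
  have hlub : IsLUB ((fun y => ‖y‖) '' KS) 1 := by
    constructor
    · rintro _ ⟨y, ⟨hyZ, hy1, hyf⟩, rfl⟩
      exact hy1
    · intro b hb
      have key : ∀ N : ℕ, (2:ℝ) ^ N / (2 ^ N + 1) ≤ b := by
        intro N
        obtain ⟨y, hyspan, hy1, hyk⟩ := aux_exists_unit_in_kernels he f N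
        set t : ℝ := 2 ^ N / (2 ^ N + 1) with ht
        have hpow : (0:ℝ) < 2 ^ N := by positivity
        have ht0 : 0 < t := by positivity
        have ht1 : t < 1 := by rw [ht, div_lt_one (by linarith)]; linarith
        have hnorm : ‖t • y‖ = t := by
          rw [norm_smul, Real.norm_of_nonneg ht0.le, hy1, mul_one]
        have hsmulf : ∀ n, f n (t • y) = (t : 𝕜) * f n y := by
          intro n
          rw [show t • y = ((t : ℝ) : 𝕜) • y from (algebraMap_smul 𝕜 _ _).symm, map_smul,
            smul_eq_mul]
        have hmem : t • y ∈ KS := by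
          refine ⟨Submodule.smul_of_tower_mem _ _ (hspan_le hyspan), by rw [hnorm]; linarith,
            fun n => ?_⟩
          rw [hnorm]
          rcases lt_or_ge n N with hn | hn
          · rw [hsmulf, hyk n hn, mul_zero, norm_zero]
            have : (0:ℝ) < 2 ^ n := by positivity
            nlinarith
          · have h1 : ‖f n (t • y)‖ ≤ t := by
              calc ‖f n (t • y)‖ ≤ ‖f n‖ * ‖t • y‖ := (f n).le_opNorm _
                _ ≤ 1 * t := by
                    rw [hnorm]; exact mul_le_mul_of_nonneg_right (hf1 n) ht0.le
                _ = t := one_mul _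
            refine le_trans h1 ?_
            have h2 : 1 - t = 1 / (2 ^ N + 1) := by
              rw [ht]; field_simp; ring
            rw [h2]
            have h3 : (2:ℝ) ^ N ≤ 2 ^ n := pow_le_pow_right₀ one_le_two hn
            rw [ht, div_eq_mul_one_div]
            exact mul_le_mul_of_nonneg_right h3 (by positivity)
        have : ‖t • y‖ ≤ b := hb ⟨t • y, hmem, rfl⟩
        rwa [hnorm] at this
      have htend : Filter.Tendsto (fun N : ℕ => (2:ℝ) ^ N / (2 ^ N + 1)) Filter.atTop (nhds 1) := by
        have h1 : Filter.Tendsto (fun N : ℕ => (2:ℝ) ^ N) Filter.atTop Filter.atTop :=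
          tendsto_pow_atTop_atTop_of_one_lt one_lt_two
        have h2 : Filter.Tendsto (fun N : ℕ => (2:ℝ) ^ N + 1) Filter.atTop Filter.atTop :=
          Filter.tendsto_atTop_add_const_right _ 1 h1
        have h3 : Filter.Tendsto (fun N : ℕ => ((2:ℝ) ^ N + 1)⁻¹) Filter.atTop (nhds 0) :=
          h2.inv_tendsto_atTop
        have h4 : Filter.Tendsto (fun N : ℕ => 1 - ((2:ℝ) ^ N + 1)⁻¹) Filter.atTop (nhds 1) := by
          have := (tendsto_const_nhds (x := (1:ℝ)) (f := Filter.atTop (α := ℕ))).sub h3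
          simpa using this
        refine h4.congr fun N => ?_
        have hpow : (0:ℝ) < 2 ^ N := by positivity
        field_simp
        ring
      exact le_of_tendsto' htend key
  refine ⟨KS, ?_, ?_, ?_, ?_, hlub, hlt, ?_⟩
  · intro y hy
    simpa [Metric.mem_closedBall] using hy.2.1
  · -- closed
    have : KS = (Z : Set Y) ∩ ({y : Y | ‖y‖ ≤ 1} ∩ ⋂ n, {y : Y | ‖f n y‖ ≤ 2 ^ n * (1 - ‖y‖)}) := by
      ext y; simp [hKS, Set.mem_iInter, and_assoc]
    rw [this]
    refine hZclosed.inter (IsClosed.inter ?_ (isClosed_iInter fun n => ?_))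
    · exact isClosed_le (continuous_norm) continuous_const
    · exact isClosed_le ((f n).continuous.norm)
        (continuous_const.mul (continuous_const.sub continuous_norm))
  · -- convex
    rintro x ⟨hxZ, hx1, hxf⟩ y ⟨hyZ, hy1, hyf⟩ a b ha hb hab
    have hmemZ : a • x + b • y ∈ Z :=
      Z.add_mem (Submodule.smul_of_tower_mem _ _ hxZ) (Submodule.smul_of_tower_mem _ _ hyZ)
    have hnorm : ‖a • x + b • y‖ ≤ a * ‖x‖ + b * ‖y‖ := by
      calc ‖a • x + b • y‖ ≤ ‖a • x‖ + ‖b • y‖ := norm_add_le _ _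
        _ = a * ‖x‖ + b * ‖y‖ := by rw [norm_smul, norm_smul, Real.norm_of_nonneg ha,
            Real.norm_of_nonneg hb]
    have hle1 : a * ‖x‖ + b * ‖y‖ ≤ 1 := by nlinarith
    refine ⟨hmemZ, le_trans hnorm hle1, fun n => ?_⟩
    have hsmul : ∀ (t : ℝ) (v : Y), f n (t • v) = (t : 𝕜) * f n v := by
      intro t v
      rw [show t • v = ((t : ℝ) : 𝕜) • v from (algebraMap_smul 𝕜 _ _).symm, map_smul, smul_eq_mul]
    have : ‖f n (a • x + b • y)‖ ≤ a * ‖f n x‖ + b * ‖f n y‖ := by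
      calc ‖f n (a • x + b • y)‖ = ‖(a : 𝕜) * f n x + (b : 𝕜) * f n y‖ := by
            rw [map_add, hsmul, hsmul]
        _ ≤ ‖(a : 𝕜) * f n x‖ + ‖(b : 𝕜) * f n y‖ := norm_add_le _ _
        _ = a * ‖f n x‖ + b * ‖f n y‖ := by
            rw [norm_mul, norm_mul]
            simp [RCLike.norm_ofReal, abs_of_nonneg ha, abs_of_nonneg hb]
    refine le_trans this ?_
    have h1 := hxf n
    have h2 := hyf n
    have hpow : (0:ℝ) < 2 ^ n := by positivity
    nlinarith [mul_le_mul_of_nonneg_left h1 ha, mul_le_mul_of_nonneg_left h2 hb, hnorm]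
  · -- balanced
    intro θ hθ v hv
    obtain ⟨y, ⟨hyZ, hy1, hyf⟩, rfl⟩ := hv
    have hθy : ‖θ • y‖ = ‖θ‖ * ‖y‖ := norm_smul _ _
    refine ⟨Z.smul_mem θ hyZ, ?_, fun n => ?_⟩
    · rw [hθy]
      calc ‖θ‖ * ‖y‖ ≤ 1 * 1 := mul_le_mul hθ hy1 (norm_nonneg _) zero_le_one
        _ = 1 := one_mul _
    · rw [map_smul, norm_smul, hθy]
      have hpow : (0:ℝ) < 2 ^ n := by positivity
      have := hyf n
      nlinarith [norm_nonneg θ, norm_nonneg y, norm_nonneg (f n y),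
        mul_le_mul_of_nonneg_left this (norm_nonneg θ)]
  · -- not remotal
    rintro ⟨x, hx, hmax⟩
    have hub : ‖x‖ ∈ upperBounds ((fun y => ‖y‖) '' KS) := by
      rintro _ ⟨y, hy, rfl⟩
      have := hmax y hy
      simpa [norm_neg] using this
    have h1 : (1:ℝ) ≤ ‖x‖ := hlub.2 hub
    exact absurd (hlt x hx) (not_lt.mpr h1)
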